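/- arXiv:1405.1638 — 4 statements merged into one kernel-verified Lean document; each statement's English description precedes it below -/
import Mathlib

section
/- Let T_k denote the Chebyshev polynomials of the first kind and define the extended Turán expression T_k^{(n)}(x) = Σ_{j=0}^{2n} ((−1)^{n+j}/(2n)!)·C(2n, j)·T_{j+k}(x)·T_{2n+k−j}(x). Then for all n ≥ 1 and k ∈ ℕ, T_k^{(n)}(x) = (2^{2n−1}/(2n)!)·(1 − x²)^n. -/
open Polynomial Polynomial.Chebyshev

lemma tT (z w xc : ℂ) (hzw : z * w = 1) (hx : z + w = 2 * xc) :
    ∀ m : ℕ, 2 * (T ℂ (m : ℤ)).eval xc = z ^ m + w ^ m := by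
  intro m
  induction m using Nat.twoStepInduction with
  | zero => norm_num
  | one => simp; linear_combination -hx
  | more m ih0 ih1 =>
    have h : ((m : ℤ) + 2 : ℤ) = ((m + 2 : ℕ) : ℤ) := by push_cast; ring
    have h2 := T_add_two ℂ (m : ℤ)
    rw [h] at h2
    rw [h2]
    simp only [eval_sub, eval_mul, eval_ofNat, eval_X]
    push_cast at ih1 ⊢
    linear_combination (z + w) * ih1 - ih0 + z ^ m * hzw + w ^ m * hzw -
      2 * eval xc (T ℂ ((m : ℤ) + 1)) * hx

set_option maxRecDepth 8000 in
theorem stmt_15 (n k : ℕ) (hn : 1 ≤ n) (x : ℝ) :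
    ∑ j ∈ Finset.range (2 * n + 1),
        ((-1 : ℝ) ^ (n + j) / (2 * n).factorial) * (2 * n).choose j *
          eval x (T ℝ (j + k)) * eval x (T ℝ (2 * n + k - j : ℕ))
      = (2 ^ (2 * n - 1) / (2 * n).factorial) * (1 - x ^ 2) ^ n := by
  obtain ⟨c, hc⟩ : ∃ c : ℂ, c ^ 2 = (x : ℂ) ^ 2 - 1 :=
    IsAlgClosed.exists_pow_nat_eq _ (by norm_num)
  set z : ℂ := (x : ℂ) + c with hz
  set w : ℂ := (x : ℂ) - c with hw
  have hzw : z * w = 1 := by rw [hz, hw]; linear_combination -hc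
  have hx : z + w = 2 * (x : ℂ) := by rw [hz, hw]; ring
  have ht := tT z w (x : ℂ) hzw hx
  rw [← Complex.ofReal_inj]
  push_cast [complex_ofReal_eval_T]
  set F : ℂ := ((2 * n).factorial : ℂ) with hF
  set B : ℂ := z ^ (2 * n + 2 * k) + w ^ (2 * n + 2 * k) with hB
  have key : ∀ j ∈ Finset.range (2 * n + 1),
      (-1 : ℂ) ^ (n + j) / F * ((2 * n).choose j) *
          eval (x : ℂ) (T ℂ ((j : ℤ) + (k : ℤ))) * eval (x : ℂ) (T ℂ ((2 * n + k - j : ℕ) : ℤ))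
        = ((-1 : ℂ) ^ n / (4 * F)) *
            ((-1) ^ j * ((2 * n).choose j) * B +
              (-z) ^ j * w ^ (2 * n - j) * ((2 * n).choose j) +
              (-w) ^ j * z ^ (2 * n - j) * ((2 * n).choose j)) := by
    intro j hj
    have hj' : j ≤ 2 * n := by simpa [Nat.lt_succ_iff] using hj
    rw [show 2 * n + k - j = 2 * n - j + k by omega]
    have hta : eval (x : ℂ) (T ℂ ((j : ℤ) + (k : ℤ))) = (z ^ (j + k) + w ^ (j + k)) / 2 := by
      have := ht (j + k); push_cast at this ⊢; linear_combination this / 2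
    have htb : eval (x : ℂ) (T ℂ ((2 * n - j + k : ℕ) : ℤ))
        = (z ^ ((2 * n - j) + k) + w ^ ((2 * n - j) + k)) / 2 := by
      have h := ht (2 * n - j + k)
      linear_combination h / 2
    rw [hta, htb]
    have hBz : z ^ (j + k) * z ^ ((2 * n - j) + k) = z ^ (2 * n + 2 * k) := by
      rw [← pow_add]; congr 1; omega
    have hBw : w ^ (j + k) * w ^ ((2 * n - j) + k) = w ^ (2 * n + 2 * k) := by
      rw [← pow_add]; congr 1; omega
    have hc1 : z ^ (j + k) * w ^ ((2 * n - j) + k) = z ^ j * w ^ (2 * n - j) := by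
      calc z ^ (j + k) * w ^ ((2 * n - j) + k)
          = z ^ j * w ^ (2 * n - j) * (z * w) ^ k := by rw [mul_pow, pow_add, pow_add]; ring
        _ = z ^ j * w ^ (2 * n - j) := by rw [hzw, one_pow, mul_one]
    have hc2 : w ^ (j + k) * z ^ ((2 * n - j) + k) = w ^ j * z ^ (2 * n - j) := by
      calc w ^ (j + k) * z ^ ((2 * n - j) + k)
          = w ^ j * z ^ (2 * n - j) * (z * w) ^ k := by rw [mul_pow, pow_add, pow_add]; ring
        _ = w ^ j * z ^ (2 * n - j) := by rw [hzw, one_pow, mul_one]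
    rw [hB]
    have hnz : (-z) ^ j = (-1 : ℂ) ^ j * z ^ j := by
      rw [show -z = (-1 : ℂ) * z by ring, mul_pow]
    have hnw : (-w) ^ j = (-1 : ℂ) ^ j * w ^ j := by
      rw [show -w = (-1 : ℂ) * w by ring, mul_pow]
    rw [hnz, hnw]
    linear_combination ((-1 : ℂ) ^ (n + j) * ((2 * n).choose j) / (4 * F)) *
      (hBz + hBw + hc1 + hc2)
  rw [Finset.sum_congr rfl key, ← Finset.mul_sum]
  rw [Finset.sum_add_distrib, Finset.sum_add_distrib, ← Finset.sum_mul, ← add_pow, ← add_pow]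
  have halt : (∑ j ∈ Finset.range (2 * n + 1), (-1 : ℂ) ^ j * ((2 * n).choose j)) = 0 := by
    have h := Int.alternating_sum_range_choose_of_ne (n := 2 * n) (by omega)
    calc (∑ j ∈ Finset.range (2 * n + 1), (-1 : ℂ) ^ j * ((2 * n).choose j))
        = ((∑ j ∈ Finset.range (2 * n + 1), (-1 : ℤ) ^ j * ((2 * n).choose j) : ℤ) : ℂ) := by
          push_cast; ring
      _ = 0 := by rw [h]; norm_num
  rw [halt, zero_mul, zero_add]
  have hsq : (-z + w) ^ (2 * n) = (4 * (x : ℂ) ^ 2 - 4) ^ n := by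
    rw [pow_mul]
    congr 1
    rw [hz, hw]
    linear_combination 4 * hc
  have hsq2 : (-w + z) ^ (2 * n) = (4 * (x : ℂ) ^ 2 - 4) ^ n := by
    rw [pow_mul]
    congr 1
    rw [hz, hw]
    linear_combination 4 * hc
  rw [hsq, hsq2]
  have h4 : ((-1 : ℂ)) ^ n * (4 * (x : ℂ) ^ 2 - 4) ^ n = (4 - 4 * (x : ℂ) ^ 2) ^ n := by
    rw [← mul_pow]; congr 1; ring
  have h2 : (4 - 4 * (x : ℂ) ^ 2) ^ n = 2 * 2 ^ (2 * n - 1) * (1 - (x : ℂ) ^ 2) ^ n := by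
    have : (4 - 4 * (x : ℂ) ^ 2) ^ n = 4 ^ n * (1 - (x : ℂ) ^ 2) ^ n := by
      rw [← mul_pow]; congr 1; ring
    rw [this]
    congr 1
    have e1 : 2 * n - 1 + 1 = 2 * n := by omega
    calc (4 : ℂ) ^ n = 2 ^ (2 * n) := by
            rw [show (4 : ℂ) = 2 ^ 2 by norm_num, ← pow_mul]
      _ = 2 ^ (2 * n - 1 + 1) := by rw [e1]
      _ = 2 * 2 ^ (2 * n - 1) := by rw [pow_succ]; ring
  linear_combination (1 / (2 * F)) * h4 + (1 / (2 * F)) * h2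
end

section
/- Let U_k denote the Chebyshev polynomials of the second kind and define the extended Turán expression T_k^{(n)}(x) = Σ_{j=0}^{2n} ((−1)^{n+j}/(2n)!)·C(2n, j)·U_{j+k}(x)·U_{2n+k−j}(x). Then for all n ≥ 1 and k ∈ ℕ, T_k^{(n)}(x) = (2^{2n−1}/(2n)!)·(1 − x²)^{n−1}. -/
open Polynomial Polynomial.Chebyshev

section aux
variable (R : Type*) [CommRing R]

theorem myU_sub_U (m : ℤ) : U R m - U R (m - 2) = 2 * T R m := by
  linear_combination (norm := ring_nf) -2 * T_eq_U_sub_X_mul_U R m - U_add_two R (m - 2)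

theorem my_two_T_mul_U (m k : ℤ) : 2 * T R m * U R k = U R (k + m) + U R (k - m) := by
  induction m using Polynomial.Chebyshev.induct with
  | zero => simp [two_mul]
  | one =>
    have h := U_add_two R (k - 1)
    rw [T_one]
    linear_combination (norm := ring_nf) -h
  | add_two m ih1 ih2 =>
    have h₁ := U_add_two R (k + m)
    have h₂ := U_add_two R (k - m - 2)
    have h₃ := T_add_two R m
    linear_combination (norm := ring_nf) 2 * U R k * h₃ + 2 * (X : R[X]) * ih1 - ih2 - h₁ - h₂
  | neg_add_one m ih1 ih2 =>
    have h₁ := U_add_two R (k - m - 1)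
    have h₂ := U_add_two R (k + m - 1)
    have h₃ := T_add_two R (-m - 1)
    linear_combination (norm := ring_nf) 2 * U R k * h₃ + 2 * (X : R[X]) * ih1 - ih2 - h₁ - h₂

theorem myUU (a b : ℤ) :
    2 * (1 - X ^ 2) * U R a * U R b = T R (a - b) - T R (a + b + 2) := by
  have h₁ := one_sub_X_sq_mul_U_eq_pol_in_T R a
  have h₂ := my_two_T_mul_U R (a + 1) b
  have h₃ := my_two_T_mul_U R (a + 2) b
  have hx1 := U_eq_X_mul_U_add_T R (a + b + 1)
  have hx2 := U_eq_X_mul_U_add_T R (b - a - 1)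
  have hL2 := myU_sub_U R (b - a)
  have hT := T_neg R (a - b)
  linear_combination (norm := ring_nf) 2 * U R b * h₁ + (X : R[X]) * h₂ - h₃ - hx1 - hx2 + hL2 + hT

end aux

noncomputable def myhh (N : ℕ) (m : ℤ) : Polynomial ℝ :=
  ∑ j ∈ Finset.range (N + 1), (-1 : ℝ[X]) ^ j * (N.choose j : ℝ[X]) * T ℝ (2 * j + m)

theorem myhh_top (N : ℕ) (m : ℤ) :
    myhh N m = ∑ j ∈ Finset.range (N + 2), (-1 : ℝ[X]) ^ j * (N.choose j : ℝ[X]) * T ℝ (2 * j + m) := by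
  rw [Finset.sum_range_succ, Nat.choose_succ_self]
  simp [myhh]

theorem myhh_succ (N : ℕ) (m : ℤ) : myhh (N + 1) m = myhh N m - myhh N (m + 2) := by
  have h1 : myhh (N + 1) m
      = ∑ j ∈ Finset.range (N + 1), (-1 : ℝ[X]) ^ (j+1) * ((N+1).choose (j+1) : ℝ[X]) * T ℝ (2 * ((j+1 : ℕ)) + m)
        + (-1 : ℝ[X]) ^ 0 * ((N+1).choose 0 : ℝ[X]) * T ℝ (2 * ((0:ℕ)) + m) := by
    rw [myhh, Finset.sum_range_succ']
  have h2 : myhh N m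
      = ∑ j ∈ Finset.range (N + 1), (-1 : ℝ[X]) ^ (j+1) * (N.choose (j+1) : ℝ[X]) * T ℝ (2 * ((j+1 : ℕ)) + m)
        + (-1 : ℝ[X]) ^ 0 * (N.choose 0 : ℝ[X]) * T ℝ (2 * ((0:ℕ)) + m) := by
    rw [myhh_top, Finset.sum_range_succ']
  have key : ∀ j ∈ Finset.range (N + 1),
      (-1 : ℝ[X]) ^ (j+1) * ((N+1).choose (j+1) : ℝ[X]) * T ℝ (2 * ((j+1 : ℕ)) + m)
      = (-1 : ℝ[X]) ^ (j+1) * (N.choose (j+1) : ℝ[X]) * T ℝ (2 * ((j+1 : ℕ)) + m)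
        - (-1 : ℝ[X]) ^ j * (N.choose j : ℝ[X]) * T ℝ (2 * j + (m + 2)) := by
    intro j hj
    have hidx : (2 * (j:ℤ) + (m + 2)) = (2 * ((j+1 : ℕ) : ℤ) + m) := by push_cast; ring
    rw [hidx, Nat.choose_succ_succ]
    push_cast
    ring
  rw [h1, h2, myhh, Finset.sum_congr rfl key, Finset.sum_sub_distrib]
  simp only [Nat.choose_zero_right, Nat.cast_one]
  ring

theorem myhh_TT (N : ℕ) (m : ℤ) :
    myhh N (m - 2) + myhh N (m + 2) = 2 * T ℝ 2 * myhh N m := by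
  simp only [myhh, ← Finset.sum_add_distrib, Finset.mul_sum]
  refine Finset.sum_congr rfl fun j _ => ?_
  have h := T_mul_T ℝ (2 * (j:ℤ) + m) 2
  linear_combination (norm := ring_nf) (-((-1 : ℝ[X]) ^ j * (N.choose j : ℝ[X]))) * h

theorem myhh_closed (n : ℕ) :
    myhh (2 * n) (-(2 * n : ℤ)) = (-4 * (1 - X ^ 2)) ^ n := by
  induction n with
  | zero => simp [myhh]
  | succ n ih =>
    have e1 : 2 * (n + 1) = (2 * n + 1) + 1 := by ring
    rw [e1]
    have h1 := myhh_succ (2 * n + 1) (-(2 * n : ℤ) - 2)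
    have h2 := myhh_succ (2 * n) (-(2 * n : ℤ) - 2)
    have h3 := myhh_succ (2 * n) (-(2 * n : ℤ))
    have h4 := myhh_TT (2 * n) (-(2 * n : ℤ))
    have hT2 := T_two ℝ
    linear_combination (norm := (push_cast; ring_nf))
      h1 + h2 - h3 + h4 + 2 * myhh (2 * n) (-(2 * n : ℤ)) * hT2
        + (4 * (X:ℝ[X]) ^ 2 - 4) * ih

theorem my_poly_main (n k : ℕ) (hn : 1 ≤ n) :
    ∑ j ∈ Finset.range (2 * n + 1),
        (-1 : ℝ[X]) ^ (n + j) * ((2 * n).choose j : ℝ[X]) * U ℝ (j + k) * U ℝ ((2 * n + k : ℤ) - j)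
      = 2 ^ (2 * n - 1) * (1 - X ^ 2) ^ (n - 1) := by
  obtain ⟨m, rfl⟩ : ∃ m, n = m + 1 := ⟨n - 1, by omega⟩
  have hc : (2 * (1 - X ^ 2) : ℝ[X]) ≠ 0 := fun h => by simpa using congrArg (eval 0) h
  apply mul_left_cancel₀ hc
  have hzero : (∑ j ∈ Finset.range (2 * (m+1) + 1), (-1 : ℝ[X]) ^ j * ((2 * (m+1)).choose j : ℝ[X])) = 0 := by
    have h := Int.alternating_sum_range_choose (n := 2 * (m+1))
    rw [if_neg (by omega)] at h
    have h2 := congrArg (fun z : ℤ => (z : ℝ[X])) h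
    push_cast at h2
    simpa using h2
  have hzero' : (∑ j ∈ Finset.range (2 * (m+1) + 1), (-1 : ℝ[X]) ^ ((m+1) + j) * ((2 * (m+1)).choose j : ℝ[X])) = 0 := by
    have : (∑ j ∈ Finset.range (2 * (m+1) + 1), (-1 : ℝ[X]) ^ ((m+1) + j) * ((2 * (m+1)).choose j : ℝ[X]))
        = (-1 : ℝ[X]) ^ (m+1) * ∑ j ∈ Finset.range (2 * (m+1) + 1), (-1 : ℝ[X]) ^ j * ((2 * (m+1)).choose j : ℝ[X]) := by
      rw [Finset.mul_sum]
      exact Finset.sum_congr rfl fun j _ => by ring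
    rw [this, hzero, mul_zero]
  have key : ∀ j ∈ Finset.range (2 * (m+1) + 1),
      2 * (1 - X ^ 2) * ((-1 : ℝ[X]) ^ ((m+1) + j) * ((2 * (m+1)).choose j : ℝ[X]) * U ℝ (j + k) * U ℝ ((2 * (m+1) + k : ℤ) - j))
      = (-1 : ℝ[X]) ^ ((m+1) + j) * ((2 * (m+1)).choose j : ℝ[X]) * T ℝ (2 * j + (-(2 * (m+1) : ℤ)))
        - (-1 : ℝ[X]) ^ ((m+1) + j) * ((2 * (m+1)).choose j : ℝ[X]) * T ℝ (2 * (m+1) + 2 * k + 2) := by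
    intro j hj
    have h := myUU ℝ ((j : ℤ) + k) ((2 * (m+1) + k : ℤ) - j)
    linear_combination (norm := (push_cast; ring_nf))
      ((-1 : ℝ[X]) ^ ((m+1) + j) * ((2 * (m+1)).choose j : ℝ[X])) * h
  rw [Finset.mul_sum]
  push_cast
  rw [Finset.sum_congr rfl key, Finset.sum_sub_distrib,
    ← Finset.sum_mul, hzero', zero_mul, sub_zero]
  have hfirst : (∑ j ∈ Finset.range (2 * (m+1) + 1),
      (-1 : ℝ[X]) ^ ((m+1) + j) * ((2 * (m+1)).choose j : ℝ[X]) * T ℝ (2 * j + (-(2 * (m+1) : ℤ))))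
      = (-1 : ℝ[X]) ^ (m+1) * myhh (2 * (m+1)) (-(2 * (m+1) : ℤ)) := by
    rw [myhh, Finset.mul_sum]
    exact Finset.sum_congr rfl fun j _ => by push_cast; ring
  have hclosed := myhh_closed (m + 1)
  push_cast at hclosed
  rw [hfirst, hclosed, show 2 * (m + 1) - 1 = 2 * m + 1 from by omega, ← mul_pow,
    show ((-1 : ℝ[X])) * (-4 * (1 - X ^ 2)) = 2 ^ 2 * (1 - X ^ 2) from by ring,
    mul_pow, ← pow_mul]
  ring

theorem stmt_16 (n k : ℕ) (hn : 1 ≤ n) (x : ℝ) :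
    ∑ j ∈ Finset.range (2 * n + 1),
        ((-1 : ℝ) ^ (n + j) / (2 * n).factorial) * (2 * n).choose j *
          eval x (U ℝ (j + k)) * eval x (U ℝ (2 * n + k - j : ℕ))
      = (2 ^ (2 * n - 1) / (2 * n).factorial) * (1 - x ^ 2) ^ (n - 1) := by
  have hp := congrArg (eval x) (my_poly_main n k hn)
  simp only [eval_finset_sum, eval_mul, eval_pow, eval_neg, eval_one, eval_sub, eval_X,
    eval_natCast, eval_ofNat] at hp
  calc ∑ j ∈ Finset.range (2 * n + 1),
        ((-1 : ℝ) ^ (n + j) / (2 * n).factorial) * (2 * n).choose j *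
          eval x (U ℝ (j + k)) * eval x (U ℝ (2 * n + k - j : ℕ))
      = ∑ j ∈ Finset.range (2 * n + 1), (1 / ((2 * n).factorial : ℝ)) *
          ((-1 : ℝ) ^ (n + j) * (2 * n).choose j *
            eval x (U ℝ (j + k)) * eval x (U ℝ ((2 * n + k : ℤ) - j))) := by
        refine Finset.sum_congr rfl fun j hj => ?_
        have hj' : j ≤ 2 * n + k := by
          have := Finset.mem_range.mp hj; omega
        rw [show ((2 * n + k - j : ℕ) : ℤ) = (2 * n + k : ℤ) - j from by
          push_cast [hj']; ring]
        ring
    _ = (1 / ((2 * n).factorial : ℝ)) * ∑ j ∈ Finset.range (2 * n + 1),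
          ((-1 : ℝ) ^ (n + j) * (2 * n).choose j *
            eval x (U ℝ (j + k)) * eval x (U ℝ ((2 * n + k : ℤ) - j))) := by
        rw [← Finset.mul_sum]
    _ = (1 / ((2 * n).factorial : ℝ)) * (2 ^ (2 * n - 1) * (1 - x ^ 2) ^ (n - 1)) := by
        rw [hp]
    _ = (2 ^ (2 * n - 1) / (2 * n).factorial) * (1 - x ^ 2) ^ (n - 1) := by ring
end

section
/- Let f be a real polynomial with only simple real zeros r_1 > r_2 > ... > r_k, all non-positive, and let g be a real polynomial of degree k−1 whose simple real zeros s_1 > ... > s_{k−1} satisfy r_k < s_{k−1} < r_{k−1} < ... < s_1 ≤ r_1 ≤ 0 with s_j ≤ r_j for all j. Then for every complex x₀ with Re x₀ > 0, f'(x₀)/f(x₀) − g'(x₀)/g(x₀) ≠ 0. -/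
open Polynomial



lemma derkey (r : ℕ → ℝ) (x : ℂ) (u : Finset ℕ) (hu : ∀ i ∈ u, x - (r i : ℂ) ≠ 0) :
    aeval x (derivative (∏ i ∈ u, (X - C (r i))))
      = (∑ i ∈ u, (x - (r i : ℂ))⁻¹) * ∏ i ∈ u, (x - (r i : ℂ)) := by
  classical
  induction u using Finset.induction_on with
  | empty => simp
  | @insert a u₀ ha ih =>
    have h1 : x - (r a : ℂ) ≠ 0 := hu a (Finset.mem_insert_self a u₀)
    have h2 : ∀ i ∈ u₀, x - (r i : ℂ) ≠ 0 :=
      fun i hi => hu i (Finset.mem_insert_of_mem hi)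
    rw [Finset.prod_insert ha, Finset.prod_insert ha, Finset.sum_insert ha,
      derivative_mul, map_add, map_mul, map_mul, ih h2]
    have hX : aeval x (X - C (r a)) = x - (r a : ℂ) := by simp
    have hd : aeval x (derivative (X - C (r a))) = 1 := by simp
    have hp : aeval x (∏ i ∈ u₀, (X - C (r i))) = ∏ i ∈ u₀, (x - (r i : ℂ)) := by
      rw [map_prod]; exact Finset.prod_congr rfl (fun i _ => by simp)
    rw [hX, hd, hp, one_mul]
    field_simp

lemma logderiv (α : ℝ) (hα : α ≠ 0) (t : Finset ℕ) (r : ℕ → ℝ) (x : ℂ)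
    (hx : ∀ i ∈ t, x - (r i : ℂ) ≠ 0) :
    aeval x (derivative (C α * ∏ i ∈ t, (X - C (r i)))) /
      aeval x (C α * ∏ i ∈ t, (X - C (r i)))
      = ∑ i ∈ t, (x - (r i : ℂ))⁻¹ := by
  have hne : (∏ i ∈ t, (x - (r i : ℂ))) ≠ 0 := Finset.prod_ne_zero_iff.mpr hx
  have hαc : (α : ℂ) ≠ 0 := Complex.ofReal_ne_zero.mpr hα
  have hp : aeval x (∏ i ∈ t, (X - C (r i))) = ∏ i ∈ t, (x - (r i : ℂ)) := by
    rw [map_prod]; exact Finset.prod_congr rfl (fun i _ => by simp)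
  rw [derivative_C_mul, map_mul, map_mul, aeval_C, derkey r x t hx, hp]
  rw [div_eq_iff (mul_ne_zero (show (algebraMap ℝ ℂ) α ≠ 0 from by simpa using hαc) hne)]
  ring

lemma sumB (k : ℕ) (hk : 1 ≤ k) (F G : ℕ → ℝ)
    (hpos : 0 < F k) (hle : ∀ j, 1 ≤ j → j ≤ k - 1 → G j ≤ F j) :
    ∑ i ∈ Finset.Icc 1 (k - 1), G i < ∑ i ∈ Finset.Icc 1 k, F i := by
  obtain ⟨m, rfl⟩ : ∃ m, k = m + 1 := ⟨k - 1, (Nat.succ_pred_eq_of_pos hk).symm⟩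
  rw [Finset.sum_Icc_succ_top (by omega)]
  simp only [Nat.add_sub_cancel] at *
  have h2 : ∑ i ∈ Finset.Icc 1 m, G i ≤ ∑ i ∈ Finset.Icc 1 m, F i :=
    Finset.sum_le_sum fun i hi => hle i (Finset.mem_Icc.mp hi).1 (Finset.mem_Icc.mp hi).2
  linarith


theorem stmt_18 (k : ℕ) (hk : 1 ≤ k) (α β : ℝ) (hα : α ≠ 0) (hβ : β ≠ 0)
    (r s : ℕ → ℝ) (f g : ℝ[X])
    (hf : f = C α * ∏ i ∈ Finset.Icc 1 k, (X - C (r i)))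
    (hg : g = C β * ∏ i ∈ Finset.Icc 1 (k - 1), (X - C (s i)))
    -- r 1 > r 2 > ... > r k, all non-positive
    (hrdec : ∀ j, 1 ≤ j → j + 1 ≤ k → r (j + 1) < r j)
    (hrnonpos : ∀ j, 1 ≤ j → j ≤ k → r j ≤ 0)
    -- interlacing: r k < s (k-1) < r (k-1) < ... < s 1 ≤ r 1
    (hlow : ∀ j, 1 ≤ j → j ≤ k - 1 → r (j + 1) < s j)
    (hhigh : ∀ j, 2 ≤ j → j ≤ k - 1 → s j < r j)
    (hhigh1 : 1 ≤ k - 1 → s 1 ≤ r 1)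
    (hs : ∀ j, 1 ≤ j → j ≤ k - 1 → s j ≤ r j) :
    ∀ x₀ : ℂ, 0 < x₀.re →
      aeval x₀ (derivative f) / aeval x₀ f - aeval x₀ (derivative g) / aeval x₀ g ≠ 0 := by
  intro x₀ hx₀
  have hner : ∀ t : ℝ, t ≤ 0 → x₀ - (t : ℂ) ≠ 0 := by
    intro t ht h
    have h2 : (x₀ - (t : ℂ)).re = 0 := by rw [h]; simp
    simp [Complex.sub_re] at h2
    linarith
  have hr0 : ∀ i, 1 ≤ i → i ≤ k → r i ≤ 0 := hrnonpos
  have hs0 : ∀ i, 1 ≤ i → i ≤ k - 1 → s i ≤ 0 := fun i h1 h2 =>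
    le_trans (hs i h1 h2) (hr0 i h1 (le_trans h2 (Nat.sub_le k 1)))
  have hrne : ∀ i ∈ Finset.Icc 1 k, x₀ - (r i : ℂ) ≠ 0 := fun i hi =>
    hner _ (hr0 i (Finset.mem_Icc.mp hi).1 (Finset.mem_Icc.mp hi).2)
  have hsne : ∀ i ∈ Finset.Icc 1 (k - 1), x₀ - (s i : ℂ) ≠ 0 := fun i hi =>
    hner _ (hs0 i (Finset.mem_Icc.mp hi).1 (Finset.mem_Icc.mp hi).2)
  rw [hf, hg, logderiv α hα _ r x₀ hrne, logderiv β hβ _ s x₀ hsne]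
  by_cases hy : x₀.im = 0
  · -- real case: real part is positive
    have hre : ∀ t : ℝ, t ≤ 0 → ((x₀ - (t : ℂ))⁻¹).re = (x₀.re - t)⁻¹ := by
      intro t ht
      have hpos : 0 < x₀.re - t := by linarith
      rw [Complex.inv_re, Complex.normSq_apply, Complex.sub_re, Complex.sub_im,
        Complex.ofReal_re, Complex.ofReal_im, hy]
      field_simp
      ring
    have hlt : (0:ℝ) < ((∑ i ∈ Finset.Icc 1 k, (x₀ - (r i : ℂ))⁻¹)
        - ∑ i ∈ Finset.Icc 1 (k - 1), (x₀ - (s i : ℂ))⁻¹).re := by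
      rw [Complex.sub_re, Complex.re_sum, Complex.re_sum]
      rw [Finset.sum_congr rfl (fun i hi => hre (r i)
        (hr0 i (Finset.mem_Icc.mp hi).1 (Finset.mem_Icc.mp hi).2))]
      rw [Finset.sum_congr rfl (fun i hi => hre (s i)
        (hs0 i (Finset.mem_Icc.mp hi).1 (Finset.mem_Icc.mp hi).2))]
      rw [sub_pos]
      apply sumB k hk
      · have : r k ≤ 0 := hr0 k hk le_rfl
        have : 0 < x₀.re - r k := by linarith
        positivity
      · intro j h1 h2
        have hsr : s j ≤ r j := hs j h1 h2
        have hrj : r j ≤ 0 := hr0 j h1 (le_trans h2 (Nat.sub_le k 1))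
        have h3 : 0 < x₀.re - r j := by linarith
        have h4 : x₀.re - r j ≤ x₀.re - s j := by linarith
        exact inv_anti₀ h3 h4
    intro h0
    rw [h0] at hlt
    simp at hlt
  · -- nonreal case: imaginary part is nonzero
    have him : ∀ t : ℝ, ((x₀ - (t : ℂ))⁻¹).im
        = -x₀.im * (Complex.normSq (x₀ - (t : ℂ)))⁻¹ := by
      intro t
      rw [Complex.inv_im, Complex.sub_im, Complex.ofReal_im, sub_zero, neg_div,
        div_eq_mul_inv, neg_mul]
    have hD : (0:ℝ) < (∑ i ∈ Finset.Icc 1 k, (Complex.normSq (x₀ - (r i : ℂ)))⁻¹)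
        - ∑ i ∈ Finset.Icc 1 (k - 1), (Complex.normSq (x₀ - (s i : ℂ)))⁻¹ := by
      rw [sub_pos]
      apply sumB k hk
      · have h1 : x₀ - (r k : ℂ) ≠ 0 := hner _ (hr0 k hk le_rfl)
        have := Complex.normSq_pos.mpr h1
        positivity
      · intro j h1 h2
        have hsr : s j ≤ r j := hs j h1 h2
        have hrj : r j ≤ 0 := hr0 j h1 (le_trans h2 (Nat.sub_le k 1))
        have h3 : 0 < x₀.re - r j := by linarith
        have h4 : x₀.re - r j ≤ x₀.re - s j := by linarith
        apply inv_anti₀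
        · rw [Complex.normSq_apply, Complex.sub_re, Complex.sub_im,
            Complex.ofReal_re, Complex.ofReal_im]
          nlinarith [sq_nonneg (x₀.im - 0)]
        · rw [Complex.normSq_apply, Complex.normSq_apply, Complex.sub_re, Complex.sub_im,
            Complex.sub_re, Complex.sub_im, Complex.ofReal_re, Complex.ofReal_im,
            Complex.ofReal_re, Complex.ofReal_im]
          nlinarith
    have hImEq : ((∑ i ∈ Finset.Icc 1 k, (x₀ - (r i : ℂ))⁻¹)
        - ∑ i ∈ Finset.Icc 1 (k - 1), (x₀ - (s i : ℂ))⁻¹).im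
        = -x₀.im * ((∑ i ∈ Finset.Icc 1 k, (Complex.normSq (x₀ - (r i : ℂ)))⁻¹)
          - ∑ i ∈ Finset.Icc 1 (k - 1), (Complex.normSq (x₀ - (s i : ℂ)))⁻¹) := by
      rw [Complex.sub_im, Complex.im_sum, Complex.im_sum]
      simp only [him]
      rw [← Finset.mul_sum, ← Finset.mul_sum, mul_sub]
    intro h0
    rw [h0] at hImEq
    simp only [Complex.zero_im] at hImEq
    have : -x₀.im ≠ 0 := by simpa using hy
    have := mul_ne_zero this (ne_of_gt hD)
    exact this hImEq.symm
end

section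
/- Let {P_k} be a sequence of real polynomials with P_k = P_{k+1}' for all k ≤ N−1, where each P_k (0 ≤ k ≤ N) has degree k and only real non-positive zeros. Then for every k with k+2 ≤ N, the Turán expression (P_{k+1}(x))² − P_{k+2}(x)·P_k(x) is weakly Hurwitz stable. -/
open Polynomial

private noncomputable def pp (R : Multiset ℂ) : ℂ[X] := (R.map (fun r => X - C r)).prod

private lemma pp_cons (r : ℂ) (R : Multiset ℂ) : pp (r ::ₘ R) = (X - C r) * pp R := by
  simp [pp]

private lemma lemB (R : Multiset ℂ) (x : ℂ) (hx : ∀ r ∈ R, x - r ≠ 0) :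
    (eval x (derivative (pp R)))^2 - eval x (derivative (derivative (pp R))) * eval x (pp R)
    = (eval x (pp R))^2 * (R.map (fun r => ((x - r)⁻¹)^2)).sum := by
  induction R using Multiset.induction with
  | empty => simp [pp]
  | cons r R ih =>
    have hr : x - r ≠ 0 := hx r (Multiset.mem_cons_self r R)
    have hih := ih (fun s hs => hx s (Multiset.mem_cons_of_mem hs))
    have key : (x - r)^2 * ((x - r)⁻¹)^2 = 1 := by field_simp
    rw [pp_cons]
    simp only [derivative_mul, derivative_sub, derivative_X, derivative_C, sub_zero, one_mul,
      derivative_add, Multiset.map_cons, Multiset.sum_cons, eval_add, eval_mul, eval_sub,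
      eval_X, eval_C]
    linear_combination (x - r)^2 * hih - (eval x (pp R))^2 * key

private lemma sum_sq_inv_ne_zero (R : Multiset ℂ) (hne : R ≠ 0) (x : ℂ) (hx : 0 < x.re)
    (hR : ∀ r ∈ R, r.im = 0 ∧ r.re ≤ 0) :
    (R.map (fun r => ((x - r)⁻¹)^2)).sum ≠ 0 := by
  -- choose direction u
  obtain ⟨u, hu⟩ : ∃ u : ℂ, ∀ r ∈ R, 0 < (u * ((x - r)⁻¹)^2).re := by
    have main : ∀ u : ℂ, (∀ w : ℂ, 0 < w.re → w.im = x.im → 0 < (u * (w⁻¹)^2).re) →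
        ∀ r ∈ R, 0 < (u * ((x - r)⁻¹)^2).re := by
      intro u h r hr
      have h1 := (hR r hr).1
      have h2 := (hR r hr).2
      refine h (x - r) (by simp; linarith) (by simp [h1])
    have facts : ∀ w : ℂ, 0 < w.re →
        0 < Complex.normSq (w^2) ∧ (w^2).re = w.re*w.re - w.im*w.im ∧
        (w^2).im = w.re*w.im + w.im*w.re := by
      intro w hw
      have hw0 : w ≠ 0 := by intro h; rw [h] at hw; simp at hw
      refine ⟨Complex.normSq_pos.2 (pow_ne_zero 2 hw0), ?_, ?_⟩
      · rw [pow_two]; simp [Complex.mul_re]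
      · rw [pow_two]; simp [Complex.mul_im]
    rcases lt_trichotomy x.im 0 with him | him | him
    · refine ⟨-Complex.I, main _ ?_⟩
      intro w hw hwim
      obtain ⟨hns, hre2, him2⟩ := facts w hw
      rw [inv_pow]
      simp only [Complex.mul_re, Complex.neg_re, Complex.neg_im, Complex.I_re, Complex.I_im,
        Complex.inv_re, Complex.inv_im]
      rw [him2, hwim]
      have : 0 < (-(w.re * x.im + x.im * w.re)) / Complex.normSq (w ^ 2) :=
        div_pos (by nlinarith) hns
      ring_nf at this ⊢; linarith
    · refine ⟨1, main _ ?_⟩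
      intro w hw hwim
      obtain ⟨hns, hre2, him2⟩ := facts w hw
      rw [inv_pow]
      simp only [one_mul, Complex.inv_re]
      rw [hre2, hwim, ← him]
      have : 0 < (w.re * w.re - x.im * x.im) / Complex.normSq (w ^ 2) :=
        div_pos (by rw [← him]; nlinarith) hns
      nlinarith [this]
    · refine ⟨Complex.I, main _ ?_⟩
      intro w hw hwim
      obtain ⟨hns, hre2, him2⟩ := facts w hw
      rw [inv_pow]
      simp only [Complex.mul_re, Complex.I_re, Complex.I_im, Complex.inv_re, Complex.inv_im]
      rw [him2, hwim]
      have : 0 < (w.re * x.im + x.im * w.re) / Complex.normSq (w ^ 2) :=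
        div_pos (by nlinarith) hns
      ring_nf at this ⊢; linarith
  intro h0
  have hre : ((R.map (fun r => u * ((x - r)⁻¹)^2)).sum).re = 0 := by
    have : (R.map (fun r => u * ((x - r)⁻¹)^2)).sum = u * (R.map (fun r => ((x - r)⁻¹)^2)).sum := by
      rw [← Multiset.sum_map_mul_left]
    rw [this, h0, mul_zero, Complex.zero_re]
  have hpos : 0 < ((R.map (fun r => u * ((x - r)⁻¹)^2)).sum).re := by
    clear hre h0
    induction R using Multiset.induction with
    | empty => exact absurd rfl hne
    | cons r R ih =>
      simp only [Multiset.map_cons, Multiset.sum_cons, Complex.add_re]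
      rcases eq_or_ne R 0 with rfl | hR0
      · simpa using hu r (Multiset.mem_cons_self r 0)
      · have := ih hR0 (fun s hs => hR s (Multiset.mem_cons_of_mem hs))
          (fun s hs => hu s (Multiset.mem_cons_of_mem hs))
        have := hu r (Multiset.mem_cons_self r R)
        linarith
  exact absurd hre (ne_of_gt hpos)

theorem stmt_19 (N : ℕ) (P : ℕ → ℝ[X])
    (hder : ∀ k, k + 1 ≤ N → P k = derivative (P (k + 1)))
    (hdeg : ∀ k, k ≤ N → (P k).natDegree = k)
    (hzeros : ∀ k, k ≤ N → ∀ z : ℂ, aeval z (P k) = 0 → ∃ r : ℝ, r ≤ 0 ∧ z = (r : ℂ)) :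
    ∀ k : ℕ, k + 2 ≤ N → ∀ x : ℂ, 0 < x.re →
      (aeval x (P (k + 1))) ^ 2 - aeval x (P (k + 2)) * aeval x (P k) ≠ 0 := by
  intro k hk x hx
  set q : ℂ[X] := (P (k+2)).map (algebraMap ℝ ℂ) with hq
  have hq2 : P (k+1) = derivative (P (k+2)) := hder (k+1) (by omega)
  have hq1 : P k = derivative (derivative (P (k+2))) := by
    rw [hder k (by omega), hq2]
  have haev : ∀ z : ℂ, aeval z (P (k+2)) = eval z q := by
    intro z; rw [aeval_def, hq, eval_map]
  have hqdeg : q.natDegree = k + 2 := by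
    rw [hq, natDegree_map, hdeg (k+2) hk]
  have hq0 : q ≠ 0 := fun h => by simp [h] at hqdeg
  have hcard : Multiset.card q.roots = q.natDegree :=
    splits_iff_card_roots.1 (IsAlgClosed.splits q)
  have hRne : q.roots ≠ 0 := by
    intro h; rw [h] at hcard; simp [hqdeg] at hcard
  have hroots : ∀ r ∈ q.roots, r.im = 0 ∧ r.re ≤ 0 := by
    intro r hr
    have : aeval r (P (k+2)) = 0 := by
      rw [haev]; exact (isRoot_of_mem_roots hr)
    obtain ⟨s, hs, rfl⟩ := hzeros (k+2) hk r this
    constructor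
    · simp
    · simpa using hs
  have hfac : C q.leadingCoeff * pp q.roots = q := by
    rw [pp]; exact C_leadingCoeff_mul_prod_multiset_X_sub_C hcard
  have hxr : ∀ r ∈ q.roots, x - r ≠ 0 := by
    intro r hr h
    have : x = r := by linear_combination h
    rw [this] at hx
    linarith [(hroots r hr).2]
  -- evaluations
  have hc0 : q.leadingCoeff ≠ 0 := leadingCoeff_ne_zero.2 hq0
  have hevq : eval x q ≠ 0 := by
    intro h
    have : aeval x (P (k+2)) = 0 := by rw [haev]; exact h
    obtain ⟨s, hs, rfl⟩ := hzeros (k+2) hk x this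
    simp at hx; linarith
  set c := q.leadingCoeff
  set v := eval x (pp q.roots) with hv
  set v1 := eval x (derivative (pp q.roots)) with hv1
  set v2 := eval x (derivative (derivative (pp q.roots))) with hv2
  have hev : eval x q = c * v := by rw [← hfac]; simp [hv]
  have hd1 : eval x (derivative q) = c * v1 := by
    rw [← hfac, derivative_mul, derivative_C]; simp [hv1]
  have hd2 : eval x (derivative (derivative q)) = c * v2 := by
    rw [← hfac, derivative_mul, derivative_C, zero_mul, zero_add, derivative_mul,
      derivative_C]; simp [hv2]
  have hv0 : v ≠ 0 := by
    intro h; rw [hev, h, mul_zero] at hevq; exact hevq rfl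
  have ha1 : aeval x (P (k+1)) = c * v1 := by
    rw [hq2, aeval_def, ← eval_map, ← derivative_map, ← hq, hd1]
  have ha0 : aeval x (P k) = c * v2 := by
    rw [hq1, aeval_def, ← eval_map, ← derivative_map, ← derivative_map, ← hq, hd2]
  have ha2 : aeval x (P (k+2)) = c * v := by rw [haev, hev]
  rw [ha1, ha0, ha2]
  have hB := lemB q.roots x hxr
  rw [← hv, ← hv1, ← hv2] at hB
  have hS := sum_sq_inv_ne_zero q.roots hRne x hx hroots
  intro h
  have : (c:ℂ)^2 * (v1^2 - v2 * v) = 0 := by linear_combination h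
  have h2 : v1^2 - v2*v = 0 := by
    rcases mul_eq_zero.1 this with h3 | h3
    · exact absurd (pow_eq_zero_iff two_ne_zero |>.1 h3) hc0
    · exact h3
  rw [hB] at h2
  have := mul_eq_zero.1 h2
  rcases this with h3 | h3
  · exact hv0 (pow_eq_zero_iff two_ne_zero |>.1 h3)
  · exact hS h3
end
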